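/- arXiv:2012.14748 — 2 statements merged into one kernel-verified Lean document; each statement's English description precedes it below -/
import Mathlib

section
/- Let A, B be Hermitian m×m complex matrices, let X be any m×m complex matrix, let L ≥ 0, and let f : ℝ → ℝ satisfy |f(λ) − f(μ)| ≤ L·|λ − μ| for every eigenvalue λ of A and every eigenvalue μ of B. Then ‖f(A)·X − X·f(B)‖_F ≤ L·‖A·X − X·B‖_F, where f(A) and f(B) are defined by applying f to the eigenvalues in spectral decompositions of A and B (the functional calculus for Hermitian matrices). -/
open Matrix

/-- The squared Frobenius (Hilbert–Schmidt) norm of a complex matrix,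
`‖X‖_F² = Re (Tr (Xᴴ X))`. -/
noncomputable def frobeniusNormSq {m : ℕ} (X : Matrix (Fin m) (Fin m) ℂ) : ℝ :=
  (Matrix.trace (Xᴴ * X)).re

lemma frobeniusNormSq_eq_sum {m : ℕ} (M : Matrix (Fin m) (Fin m) ℂ) :
    frobeniusNormSq M = ∑ i, ∑ j, Complex.normSq (M i j) := by
  unfold frobeniusNormSq
  rw [Matrix.trace]
  simp only [Matrix.diag_apply, Matrix.mul_apply, Matrix.conjTranspose_apply,
    Complex.re_sum]
  rw [Finset.sum_comm]
  congr 1; ext i; congr 1; ext j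
  simp [Complex.normSq_apply, Complex.mul_re]

lemma frobeniusNormSq_unitary_conj {m : ℕ} (U V : Matrix.unitaryGroup (Fin m) ℂ)
    (M : Matrix (Fin m) (Fin m) ℂ) :
    frobeniusNormSq ((U : Matrix (Fin m) (Fin m) ℂ) * M *
      star (V : Matrix (Fin m) (Fin m) ℂ)) = frobeniusNormSq M := by
  unfold frobeniusNormSq
  have hU : star (U : Matrix (Fin m) (Fin m) ℂ) * U = 1 := Unitary.coe_star_mul_self U
  have hV : star (V : Matrix (Fin m) (Fin m) ℂ) * V = 1 := Unitary.coe_star_mul_self V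
  congr 1
  rw [← Matrix.star_eq_conjTranspose, ← Matrix.star_eq_conjTranspose]
  have hM : star ((U : Matrix (Fin m) (Fin m) ℂ) * M * star (V : Matrix (Fin m) (Fin m) ℂ)) *
      ((U : Matrix (Fin m) (Fin m) ℂ) * M * star (V : Matrix (Fin m) (Fin m) ℂ))
      = (V : Matrix (Fin m) (Fin m) ℂ) * (star M * M) *
          star (V : Matrix (Fin m) (Fin m) ℂ) := by
    rw [StarMul.star_mul, StarMul.star_mul, star_star]
    calc (V : Matrix (Fin m) (Fin m) ℂ) * (star M * star (U : Matrix (Fin m) (Fin m) ℂ)) *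
          ((U : Matrix (Fin m) (Fin m) ℂ) * M * star (V : Matrix (Fin m) (Fin m) ℂ))
        = (V : Matrix (Fin m) (Fin m) ℂ) * (star M *
            (star (U : Matrix (Fin m) (Fin m) ℂ) * U) * M) *
            star (V : Matrix (Fin m) (Fin m) ℂ) := by
          simp only [Matrix.mul_assoc]
      _ = _ := by rw [hU, mul_one]
  rw [hM, Matrix.trace_mul_cycle, ← Matrix.mul_assoc, hV, Matrix.one_mul]

/-- Lipschitz commutator estimate for the functional calculus of Hermitian matrices:
if `|f(λ) − f(μ)| ≤ L|λ − μ|` for all eigenvalues `λ` of `A` and `μ` of `B`, then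
`‖f(A)X − Xf(B)‖_F ≤ L‖AX − XB‖_F`. -/
theorem frobenius_norm_cfc_commutator_le
    {m : ℕ} {A B : Matrix (Fin m) (Fin m) ℂ}
    (hA : A.IsHermitian) (hB : B.IsHermitian)
    (X : Matrix (Fin m) (Fin m) ℂ) {L : ℝ} (hL : 0 ≤ L) (f : ℝ → ℝ)
    (hf : ∀ i j, |f (hA.eigenvalues i) - f (hB.eigenvalues j)| ≤
      L * |hA.eigenvalues i - hB.eigenvalues j|) :
    Real.sqrt (frobeniusNormSq (hA.cfc f * X - X * hB.cfc f)) ≤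
      L * Real.sqrt (frobeniusNormSq (A * X - X * B)) := by
  set U : Matrix (Fin m) (Fin m) ℂ := (hA.eigenvectorUnitary : Matrix (Fin m) (Fin m) ℂ)
    with hUdef
  set V : Matrix (Fin m) (Fin m) ℂ := (hB.eigenvectorUnitary : Matrix (Fin m) (Fin m) ℂ)
    with hVdef
  set Y : Matrix (Fin m) (Fin m) ℂ := star U * X * V with hY
  have hUU : star U * U = 1 := Unitary.coe_star_mul_self _
  have hUU' : U * star U = 1 := Unitary.coe_mul_star_self _
  have hVV : star V * V = 1 := Unitary.coe_star_mul_self _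
  have hVV' : V * star V = 1 := Unitary.coe_mul_star_self _
  have hX : X = U * Y * star V := by
    rw [hY]
    calc X = (U * star U) * X * (V * star V) := by rw [hUU', hVV', Matrix.one_mul,
          Matrix.mul_one]
      _ = U * (star U * X * V) * star V := by simp only [Matrix.mul_assoc]
  -- conjugation identity
  have key : ∀ d e : Fin m → ℝ,
      (U * diagonal (Complex.ofReal ∘ d) * star U) * X -
        X * (V * diagonal (Complex.ofReal ∘ e) * star V)
      = U * (diagonal (Complex.ofReal ∘ d) * Y - Y * diagonal (Complex.ofReal ∘ e)) *
          star V := by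
    intro d e
    rw [Matrix.mul_sub, Matrix.sub_mul]
    congr 1
    · calc (U * diagonal (Complex.ofReal ∘ d) * star U) * X
          = U * (diagonal (Complex.ofReal ∘ d) * ((star U * U) * (Y * star V))) := by
            rw [hX]; simp only [Matrix.mul_assoc]
        _ = U * (diagonal (Complex.ofReal ∘ d) * Y) * star V := by
            rw [hUU, Matrix.one_mul]; simp only [Matrix.mul_assoc]
    · calc X * (V * diagonal (Complex.ofReal ∘ e) * star V)
          = U * (Y * ((star V * V) * (diagonal (Complex.ofReal ∘ e) * star V))) := by
            rw [hX]; simp only [Matrix.mul_assoc]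
        _ = U * (Y * diagonal (Complex.ofReal ∘ e)) * star V := by
            rw [hVV, Matrix.one_mul]; simp only [Matrix.mul_assoc]
  -- squared norms of diagonal commutators
  have diagSq : ∀ d e : Fin m → ℝ,
      frobeniusNormSq (diagonal (Complex.ofReal ∘ d) * Y - Y * diagonal (Complex.ofReal ∘ e))
      = ∑ i, ∑ j, (d i - e j) ^ 2 * Complex.normSq (Y i j) := by
    intro d e
    rw [frobeniusNormSq_eq_sum]
    congr 1; ext i; congr 1; ext j
    have : (diagonal (Complex.ofReal ∘ d) * Y - Y * diagonal (Complex.ofReal ∘ e)) i j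
        = ((d i - e j : ℝ) : ℂ) * Y i j := by
      simp only [Matrix.sub_apply, Matrix.diagonal_mul, Matrix.mul_diagonal, Function.comp]
      push_cast
      ring
    rw [this, Complex.normSq_mul, Complex.normSq_ofReal, sq]
  have hAeq : A = U * diagonal (Complex.ofReal ∘ hA.eigenvalues) * star U :=
    hA.spectral_theorem
  have hBeq : B = V * diagonal (Complex.ofReal ∘ hB.eigenvalues) * star V :=
    hB.spectral_theorem
  have hcfcA : hA.cfc f = U * diagonal (Complex.ofReal ∘ f ∘ hA.eigenvalues) * star U := rfl
  have hcfcB : hB.cfc f = V * diagonal (Complex.ofReal ∘ f ∘ hB.eigenvalues) * star V := rfl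
  have h1 : frobeniusNormSq (hA.cfc f * X - X * hB.cfc f)
      = ∑ i, ∑ j, (f (hA.eigenvalues i) - f (hB.eigenvalues j)) ^ 2 *
          Complex.normSq (Y i j) := by
    rw [hcfcA, hcfcB, key (f ∘ hA.eigenvalues) (f ∘ hB.eigenvalues),
      frobeniusNormSq_unitary_conj hA.eigenvectorUnitary hB.eigenvectorUnitary,
      diagSq]
    rfl
  have h2 : frobeniusNormSq (A * X - X * B)
      = ∑ i, ∑ j, (hA.eigenvalues i - hB.eigenvalues j) ^ 2 * Complex.normSq (Y i j) := by
    conv_lhs => rw [hAeq, hBeq]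
    rw [key hA.eigenvalues hB.eigenvalues,
      frobeniusNormSq_unitary_conj hA.eigenvectorUnitary hB.eigenvectorUnitary, diagSq]
  have hle : frobeniusNormSq (hA.cfc f * X - X * hB.cfc f)
      ≤ L ^ 2 * frobeniusNormSq (A * X - X * B) := by
    rw [h1, h2, Finset.mul_sum]
    refine Finset.sum_le_sum fun i _ => ?_
    rw [Finset.mul_sum]
    refine Finset.sum_le_sum fun j _ => ?_
    rw [← mul_assoc]
    refine mul_le_mul_of_nonneg_right ?_ (Complex.normSq_nonneg _)
    calc (f (hA.eigenvalues i) - f (hB.eigenvalues j)) ^ 2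
        = |f (hA.eigenvalues i) - f (hB.eigenvalues j)| ^ 2 := (sq_abs _).symm
      _ ≤ (L * |hA.eigenvalues i - hB.eigenvalues j|) ^ 2 := by
          apply pow_le_pow_left₀ (abs_nonneg _) (hf i j)
      _ = L ^ 2 * (hA.eigenvalues i - hB.eigenvalues j) ^ 2 := by
          rw [mul_pow, sq_abs]
  calc Real.sqrt (frobeniusNormSq (hA.cfc f * X - X * hB.cfc f))
      ≤ Real.sqrt (L ^ 2 * frobeniusNormSq (A * X - X * B)) := Real.sqrt_le_sqrt hle
    _ = L * Real.sqrt (frobeniusNormSq (A * X - X * B)) := by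
        rw [Real.sqrt_mul (sq_nonneg L), Real.sqrt_sq hL]
end

section
/- Let F be a finite set of m×m complex matrices closed under conjugate transpose (F = {x* : x ∈ F}), let τ(X) := Tr(X)/m be the normalized trace, let E(a) := Σ_{x∈F} τ((xa−ax)*(xa−ax)) be the associated elementary Dirichlet form, and let ‖a‖₂² := τ(a*a). Suppose there exists ε > 0 such that for every unitary m×m matrix u one has ε·(1 − |τ(u)|²) ≤ E(u). Then for every m×m complex matrix a one has (ε/8)·‖a − τ(a)·1‖₂² ≤ E(a), i.e. the elementary Dirichlet form E satisfies a Poincaré inequality with constant ε/8. -/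
open Matrix

/-- The normalized trace `τ(X) = Tr(X)/m` on `m × m` complex matrices. -/
noncomputable def normalizedTrace {m : ℕ} (X : Matrix (Fin m) (Fin m) ℂ) : ℂ :=
  Matrix.trace X / (m : ℂ)

/-- The elementary Dirichlet form `E_F(a) = Σ_{x∈F} τ((xa−ax)*(xa−ax))` associated
to a finite set `F` of matrices (value taken as a real number). -/
noncomputable def elementaryDirichletForm {m : ℕ}
    (F : Finset (Matrix (Fin m) (Fin m) ℂ)) (a : Matrix (Fin m) (Fin m) ℂ) : ℝ :=
  ∑ x ∈ F, (normalizedTrace ((x * a - a * x)ᴴ * (x * a - a * x))).re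

namespace PoincareAux

abbrev Mat (m : ℕ) := Matrix (Fin m) (Fin m) ℂ

variable {m : ℕ}

/-- Squared Frobenius norm. -/
noncomputable def frob (M : Mat m) : ℝ := ∑ i, ∑ j, Complex.normSq (M i j)

lemma frob_nonneg (M : Mat m) : 0 ≤ frob M :=
  Finset.sum_nonneg fun _ _ => Finset.sum_nonneg fun _ _ => Complex.normSq_nonneg _

lemma trace_conjTranspose_mul (M : Mat m) :
    Matrix.trace (Mᴴ * M) = ((frob M : ℝ) : ℂ) := by
  have h : ∀ i j : Fin m, ((Complex.normSq (M i j) : ℝ) : ℂ)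
      = (starRingEnd ℂ) (M i j) * M i j := by
    intro i j; rw [mul_comm, Complex.mul_conj]
  simp only [frob, Complex.ofReal_sum, h]
  rw [Finset.sum_comm]
  simp [Matrix.trace, Matrix.diag, Matrix.mul_apply, Matrix.conjTranspose_apply,
    Complex.star_def]

lemma nt_re (M : Mat m) : (normalizedTrace (Mᴴ * M)).re = frob M / m := by
  rw [normalizedTrace, trace_conjTranspose_mul, ← Complex.ofReal_natCast,
    ← Complex.ofReal_div, Complex.ofReal_re]

lemma E_eq (F : Finset (Mat m)) (a : Mat m) :
    elementaryDirichletForm F a = (∑ x ∈ F, frob (x * a - a * x)) / m := by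
  rw [elementaryDirichletForm, Finset.sum_div]
  exact Finset.sum_congr rfl fun x _ => nt_re _

lemma frob_conjTranspose (M : Mat m) : frob Mᴴ = frob M := by
  rw [frob, Finset.sum_comm]
  simp [frob, Matrix.conjTranspose_apply, Complex.star_def, Complex.normSq_conj]

lemma frob_neg (M : Mat m) : frob (-M) = frob M := by simp [frob]

lemma frob_smul_I (M : Mat m) : frob (Complex.I • M) = frob M := by
  simp [frob, Complex.normSq_mul]

lemma frob_parallelogram (P Q : Mat m) :
    frob (P + Q) + frob (P - Q) = 2 * frob P + 2 * frob Q := by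
  simp only [frob, Finset.mul_sum, ← Finset.sum_add_distrib]
  refine Finset.sum_congr rfl fun i _ => Finset.sum_congr rfl fun j _ => ?_
  simp only [Matrix.add_apply, Matrix.sub_apply, Complex.normSq_add, Complex.normSq_sub]
  ring

lemma trace_unitary_conj (U D : Mat m) (hU' : Uᴴ * U = 1) :
    Matrix.trace (U * D * Uᴴ) = Matrix.trace D := by
  rw [Matrix.trace_mul_comm, ← mul_assoc, hU', one_mul]

lemma frob_unitary_conj (U M : Mat m) (hU : U * Uᴴ = 1) (hU' : Uᴴ * U = 1) :
    frob (U * M * Uᴴ) = frob M := by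
  have e : (U * M * Uᴴ)ᴴ * (U * M * Uᴴ) = U * (Mᴴ * M) * Uᴴ := by
    have cancel : ∀ Z : Mat m, Uᴴ * (U * Z) = Z := by
      intro Z; rw [← mul_assoc, hU', one_mul]
    simp only [Matrix.conjTranspose_mul, Matrix.conjTranspose_conjTranspose, mul_assoc, cancel]
  have h1 : Matrix.trace ((U * M * Uᴴ)ᴴ * (U * M * Uᴴ)) = Matrix.trace (Mᴴ * M) := by
    rw [e, trace_unitary_conj _ _ hU']
  rw [trace_conjTranspose_mul, trace_conjTranspose_mul] at h1
  exact_mod_cast h1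

lemma conj_mul_conj (U A B : Mat m) (hU' : Uᴴ * U = 1) :
    (U * A * Uᴴ) * (U * B * Uᴴ) = U * (A * B) * Uᴴ := by
  have h : ∀ Z : Mat m, Uᴴ * (U * Z) = Z := by
    intro Z; rw [← mul_assoc, hU', one_mul]
  simp only [mul_assoc, h]

lemma comm_conj (U x D : Mat m) (hU : U * Uᴴ = 1) (hU' : Uᴴ * U = 1) :
    x * (U * D * Uᴴ) - (U * D * Uᴴ) * x
      = U * ((Uᴴ * x * U) * D - D * (Uᴴ * x * U)) * Uᴴ := by
  have hx : U * (Uᴴ * x * U) * Uᴴ = x := by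
    simp only [← mul_assoc]
    rw [hU, one_mul, mul_assoc, hU, mul_one]
  calc x * (U * D * Uᴴ) - (U * D * Uᴴ) * x
      = (U * (Uᴴ * x * U) * Uᴴ) * (U * D * Uᴴ)
        - (U * D * Uᴴ) * (U * (Uᴴ * x * U) * Uᴴ) := by rw [hx]
    _ = U * ((Uᴴ * x * U) * D) * Uᴴ - U * (D * (Uᴴ * x * U)) * Uᴴ := by
        rw [conj_mul_conj _ _ _ hU', conj_mul_conj _ _ _ hU']
    _ = _ := by rw [Matrix.mul_sub, Matrix.sub_mul]

lemma frob_diag_comm (y : Mat m) (d : Fin m → ℂ) :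
    frob (y * Matrix.diagonal d - Matrix.diagonal d * y)
      = ∑ i, ∑ j, Complex.normSq (y i j) * Complex.normSq (d j - d i) := by
  unfold frob
  refine Finset.sum_congr rfl fun i _ => Finset.sum_congr rfl fun j _ => ?_
  rw [Matrix.sub_apply, Matrix.mul_diagonal, Matrix.diagonal_mul, ← Complex.normSq_mul]
  congr 1
  ring

lemma frob_diagonal (d : Fin m → ℂ) :
    frob (Matrix.diagonal d) = ∑ k, Complex.normSq (d k) := by
  unfold frob
  refine Finset.sum_congr rfl fun i _ => ?_
  rw [Finset.sum_eq_single i]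
  · simp
  · intro j _ hj
    rw [Matrix.diagonal_apply_ne' _ hj]
    simp
  · intro h; exact absurd (Finset.mem_univ i) h

lemma exp_mul_conj_exp (α β : ℝ) :
    Complex.exp ((α : ℂ) * Complex.I) * (starRingEnd ℂ) (Complex.exp ((β : ℂ) * Complex.I))
      = Complex.exp (((α - β : ℝ) : ℂ) * Complex.I) := by
  rw [← Complex.exp_conj, ← Complex.exp_add]
  congr 1
  rw [_root_.map_mul, Complex.conj_ofReal, Complex.conj_I]
  push_cast
  ring

lemma normSq_exp_sub_exp (α β : ℝ) :
    Complex.normSq (Complex.exp ((α : ℂ) * Complex.I) - Complex.exp ((β : ℂ) * Complex.I))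
      = 2 - 2 * Real.cos (α - β) := by
  have h1 : ∀ x : ℝ, Complex.normSq (Complex.exp ((x : ℂ) * Complex.I)) = 1 := by
    intro x
    rw [← Complex.sq_norm, Complex.norm_exp_ofReal_mul_I]
    norm_num
  rw [Complex.normSq_sub, exp_mul_conj_exp, h1, h1, Complex.exp_ofReal_mul_I_re]
  ring

lemma one_sub_cos_le (x : ℝ) : 1 - Real.cos x ≤ x ^ 2 / 2 := by
  have := Real.one_sub_sq_div_two_le_cos (x := x); linarith

lemma sq_div_eight_le_one_sub_cos {x : ℝ} (hx : |x| ≤ 1) :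
    x ^ 2 / 8 ≤ 1 - Real.cos x := by
  have h1 : |x| ≤ Real.pi := le_trans hx (by linarith [Real.pi_gt_three])
  have h2 := Real.cos_le_one_sub_mul_cos_sq h1
  have hp : (0:ℝ) < Real.pi := Real.pi_pos
  have h4 : (1:ℝ)/8 ≤ 2 / Real.pi ^ 2 := by
    rw [div_le_div_iff₀ (by norm_num) (by positivity)]
    nlinarith [Real.pi_le_four]
  have h5 : (1/8 : ℝ) * x ^ 2 ≤ (2 / Real.pi ^ 2) * x ^ 2 :=
    mul_le_mul_of_nonneg_right h4 (sq_nonneg x)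
  linarith

lemma pair_sum_identity (hm : 0 < m) (lam : Fin m → ℝ) :
    ∑ k, ∑ l, (lam k - lam l) ^ 2
      = 2 * m * ∑ k, (lam k - (∑ k, lam k) / m) ^ 2 := by
  have hm' : (m:ℝ) ≠ 0 := Nat.cast_ne_zero.mpr hm.ne'
  set Λ : ℝ := ∑ k, lam k with hΛ
  set Q : ℝ := ∑ k, (lam k) ^ 2 with hQ
  have hrow : ∀ k, ∑ l, (lam k - lam l) ^ 2
      = (m:ℝ) * (lam k) ^ 2 - 2 * lam k * Λ + Q := by
    intro k
    have h : ∀ l : Fin m, (lam k - lam l) ^ 2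
        = (lam k) ^ 2 - (2 * lam k) * lam l + (lam l) ^ 2 := fun l => by ring
    rw [Finset.sum_congr rfl fun l _ => h l, Finset.sum_add_distrib,
      Finset.sum_sub_distrib, Finset.sum_const, ← Finset.mul_sum]
    simp only [Finset.card_univ, Fintype.card_fin, nsmul_eq_mul]
    try ring
  have hA : ∑ k, ∑ l, (lam k - lam l) ^ 2 = 2 * (m:ℝ) * Q - 2 * Λ ^ 2 := by
    rw [Finset.sum_congr rfl fun k _ => hrow k, Finset.sum_add_distrib,
      Finset.sum_sub_distrib, ← Finset.mul_sum, Finset.sum_const]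
    have h2 : ∑ k, 2 * lam k * Λ = 2 * Λ * Λ := by
      rw [← Finset.sum_mul]
      rw [show ∑ k, 2 * lam k = 2 * Λ from by rw [← Finset.mul_sum]]
    rw [h2]
    simp only [Finset.card_univ, Fintype.card_fin, nsmul_eq_mul]
    ring
  have hB : ∑ k, (lam k - Λ / m) ^ 2 = Q - Λ ^ 2 / m := by
    have h : ∀ k : Fin m, (lam k - Λ / m) ^ 2
        = (lam k) ^ 2 - (2 * (Λ / m)) * lam k + (Λ / m) ^ 2 := fun k => by ring
    rw [Finset.sum_congr rfl fun k _ => h k, Finset.sum_add_distrib,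
      Finset.sum_sub_distrib, ← Finset.mul_sum, Finset.sum_const]
    simp only [Finset.card_univ, Fintype.card_fin, nsmul_eq_mul, ← hΛ]
    field_simp
    ring
  rw [hA, hB]
  field_simp

lemma normSq_sub_ofReal (α β : ℝ) :
    Complex.normSq ((α : ℂ) - (β : ℂ)) = (α - β) ^ 2 := by
  rw [← Complex.ofReal_sub, Complex.normSq_ofReal]
  ring

/-- The Poincaré inequality for Hermitian matrices, with constant `ε/8`. -/
lemma hermitian_poincare (hm : 0 < m) (F : Finset (Mat m))
    {ε : ℝ} (hε : 0 < ε)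
    (hgap : ∀ u : Mat m, u ∈ Matrix.unitaryGroup (Fin m) ℂ →
      ε * (1 - ‖normalizedTrace u‖ ^ 2) ≤ elementaryDirichletForm F u)
    (b : Mat m) (hb : b.IsHermitian) :
    (ε / 8) * (normalizedTrace ((b - normalizedTrace b • 1)ᴴ *
        (b - normalizedTrace b • 1))).re ≤ elementaryDirichletForm F b := by
  classical
  have hmR : (0:ℝ) < (m:ℝ) := by exact_mod_cast hm
  set V : Mat m := ↑hb.eigenvectorUnitary with hVdef
  have hVmem : V ∈ Matrix.unitaryGroup (Fin m) ℂ := hb.eigenvectorUnitary.2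
  have hVV : V * Vᴴ = 1 := by
    have := Matrix.mem_unitaryGroup_iff.mp hVmem
    rwa [Matrix.star_eq_conjTranspose] at this
  have hV'V : Vᴴ * V = 1 := by
    have := Matrix.mem_unitaryGroup_iff'.mp hVmem
    rwa [Matrix.star_eq_conjTranspose] at this
  set lam : Fin m → ℝ := hb.eigenvalues with hlamdef
  have hspec : b = V * Matrix.diagonal (fun k => ((lam k : ℝ) : ℂ)) * Vᴴ := by
    have h := hb.spectral_theorem
    rw [Unitary.conjStarAlgAut_apply, Matrix.star_eq_conjTranspose] at h
    exact h
  -- choice of t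
  set S : ℝ := ∑ k, |lam k| with hSdef
  have hS : 0 ≤ S := Finset.sum_nonneg fun _ _ => abs_nonneg _
  set t : ℝ := (1 + 2 * S)⁻¹ with htdef
  have ht : 0 < t := by positivity
  have hts : t * (1 + 2 * S) = 1 := inv_mul_cancel₀ (by positivity)
  have habs : ∀ k l : Fin m, |t * (lam k - lam l)| ≤ 1 := by
    intro k l
    have h1 : |lam k| ≤ S :=
      Finset.single_le_sum (f := fun k => |lam k|) (fun _ _ => abs_nonneg _)
        (Finset.mem_univ k)
    have h2 : |lam l| ≤ S :=
      Finset.single_le_sum (f := fun k => |lam k|) (fun _ _ => abs_nonneg _)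
        (Finset.mem_univ l)
    have h3 : |lam k - lam l| ≤ 2 * S := by
      calc |lam k - lam l| = |lam k + -(lam l)| := by rw [sub_eq_add_neg]
        _ ≤ |lam k| + |-(lam l)| := abs_add_le _ _
        _ = |lam k| + |lam l| := by rw [abs_neg]
        _ ≤ 2 * S := by linarith
    rw [abs_mul, abs_of_pos ht]
    nlinarith
  set θ : Fin m → ℝ := fun k => t * lam k with hθdef
  set d : Fin m → ℂ := fun k => Complex.exp (((θ k : ℝ) : ℂ) * Complex.I) with hddef
  set u : Mat m := V * Matrix.diagonal d * Vᴴ with hudef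
  have hdconj : ∀ k, d k * (starRingEnd ℂ) (d k) = 1 := by
    intro k
    rw [Complex.mul_conj, ← Complex.sq_norm, Complex.norm_exp_ofReal_mul_I]
    norm_num
  have humem : u ∈ Matrix.unitaryGroup (Fin m) ℂ := by
    rw [Matrix.mem_unitaryGroup_iff, Matrix.star_eq_conjTranspose]
    have huH : uᴴ = V * Matrix.diagonal (star d) * Vᴴ := by
      rw [hudef, Matrix.conjTranspose_mul, Matrix.conjTranspose_mul,
        Matrix.conjTranspose_conjTranspose, Matrix.diagonal_conjTranspose, ← mul_assoc]
    rw [huH, hudef, conj_mul_conj _ _ _ hV'V, Matrix.diagonal_mul_diagonal]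
    have : (Matrix.diagonal fun i => d i * star d i) = (1 : Mat m) := by
      rw [show (fun i => d i * star d i) = fun _ => (1:ℂ) from funext fun i => hdconj i]
      exact Matrix.diagonal_one
    rw [this, mul_one, hVV]
  have htrace_u : Matrix.trace u = ∑ k, d k := by
    rw [hudef, trace_unitary_conj _ _ hV'V, Matrix.trace_diagonal]
  -- the norm of the normalized trace of u
  have hnorm_u : ‖normalizedTrace u‖ ^ 2
      = (∑ k, ∑ l, Real.cos (θ k - θ l)) / ((m:ℝ) ^ 2) := by
    rw [normalizedTrace, htrace_u, Complex.sq_norm, Complex.normSq_div]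
    congr 1
    · have hmul : (∑ k, d k) * (starRingEnd ℂ) (∑ l, d l)
          = ∑ k, ∑ l, Complex.exp (((θ k - θ l : ℝ) : ℂ) * Complex.I) := by
        rw [map_sum, Finset.sum_mul_sum]
        exact Finset.sum_congr rfl fun k _ => Finset.sum_congr rfl fun l _ =>
          exp_mul_conj_exp _ _
      have := congrArg Complex.re hmul
      rw [Complex.mul_conj] at this
      rw [Complex.ofReal_re] at this
      rw [this, Complex.re_sum]
      refine Finset.sum_congr rfl fun k _ => ?_
      rw [Complex.re_sum]
      exact Finset.sum_congr rfl fun l _ => Complex.exp_ofReal_mul_I_re _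
    · rw [← Complex.ofReal_natCast, Complex.normSq_ofReal]
      ring
  have h1cos : 1 - ‖normalizedTrace u‖ ^ 2
      = (∑ k, ∑ l, (1 - Real.cos (θ k - θ l))) / ((m:ℝ) ^ 2) := by
    rw [hnorm_u]
    have hsum : ∑ k : Fin m, ∑ l : Fin m, (1 - Real.cos (θ k - θ l))
        = (m:ℝ) ^ 2 - ∑ k, ∑ l, Real.cos (θ k - θ l) := by
      simp only [Finset.sum_sub_distrib, Finset.sum_const, Finset.card_univ,
        Fintype.card_fin, nsmul_eq_mul]
      ring
    rw [hsum]
    field_simp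
  -- Dirichlet forms in the eigenbasis
  have hEb : elementaryDirichletForm F b
      = (∑ x ∈ F, ∑ i, ∑ j, Complex.normSq ((Vᴴ * x * V) i j)
          * ((lam j - lam i) ^ 2)) / m := by
    rw [E_eq]
    congr 1
    refine Finset.sum_congr rfl fun x _ => ?_
    conv_lhs => rw [hspec]
    rw [comm_conj _ _ _ hVV hV'V, frob_unitary_conj _ _ hVV hV'V, frob_diag_comm]
    exact Finset.sum_congr rfl fun i _ => Finset.sum_congr rfl fun j _ => by
      rw [normSq_sub_ofReal]
  have hEu : elementaryDirichletForm F u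
      = (∑ x ∈ F, ∑ i, ∑ j, Complex.normSq ((Vᴴ * x * V) i j)
          * Complex.normSq (d j - d i)) / m := by
    rw [E_eq]
    congr 1
    refine Finset.sum_congr rfl fun x _ => ?_
    rw [hudef, comm_conj _ _ _ hVV hV'V, frob_unitary_conj _ _ hVV hV'V, frob_diag_comm]
  have hEuEb : elementaryDirichletForm F u ≤ t ^ 2 * elementaryDirichletForm F b := by
    rw [hEu, hEb, ← mul_div_assoc]
    refine div_le_div_of_nonneg_right ?_ hmR.le
    rw [Finset.mul_sum]
    refine Finset.sum_le_sum fun x _ => ?_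
    rw [Finset.mul_sum]
    refine Finset.sum_le_sum fun i _ => ?_
    rw [Finset.mul_sum]
    refine Finset.sum_le_sum fun j _ => ?_
    rw [show t ^ 2 * (Complex.normSq ((Vᴴ * x * V) i j) * (lam j - lam i) ^ 2)
        = Complex.normSq ((Vᴴ * x * V) i j) * (t ^ 2 * (lam j - lam i) ^ 2) from by ring]
    refine mul_le_mul_of_nonneg_left ?_ (Complex.normSq_nonneg _)
    rw [hddef]
    rw [normSq_exp_sub_exp]
    have h1 : θ j - θ i = t * (lam j - lam i) := by rw [hθdef]; ring
    have h2 := one_sub_cos_le (θ j - θ i)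
    have h3 : (θ j - θ i) ^ 2 = t ^ 2 * (lam j - lam i) ^ 2 := by rw [h1]; ring
    linarith
  -- variance computation
  set μ : ℝ := (∑ k, lam k) / m with hμdef
  have hτb : normalizedTrace b = ((μ : ℝ) : ℂ) := by
    rw [normalizedTrace]
    have htr : Matrix.trace b = ((∑ k, lam k : ℝ) : ℂ) := by
      conv_lhs => rw [hspec]
      rw [trace_unitary_conj _ _ hV'V, Matrix.trace_diagonal]
      push_cast
      rfl
    rw [htr, hμdef, Complex.ofReal_div, Complex.ofReal_natCast]
  have hb' : b - normalizedTrace b • 1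
      = V * Matrix.diagonal (fun k => ((lam k - μ : ℝ) : ℂ)) * Vᴴ := by
    rw [hτb]
    have hdiag : Matrix.diagonal (fun k => ((lam k - μ : ℝ) : ℂ))
        = Matrix.diagonal (fun k => ((lam k : ℝ) : ℂ)) - ((μ : ℝ) : ℂ) • 1 := by
      rw [Matrix.smul_one_eq_diagonal, Matrix.diagonal_sub]
      congr 1
      funext k
      push_cast
      ring
    rw [hdiag, Matrix.mul_sub, Matrix.sub_mul, ← hspec, mul_smul_comm, mul_one,
      smul_mul_assoc, hVV]
  set W : ℝ := ∑ k, (lam k - μ) ^ 2 with hWdef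
  have hW : 0 ≤ W := Finset.sum_nonneg fun _ _ => sq_nonneg _
  have hvar : (normalizedTrace ((b - normalizedTrace b • 1)ᴴ *
      (b - normalizedTrace b • 1))).re = W / m := by
    rw [nt_re, hb', frob_unitary_conj _ _ hVV hV'V, frob_diagonal]
    congr 1
    exact Finset.sum_congr rfl fun k _ => by
      rw [Complex.normSq_ofReal]; ring
  -- lower bound for 1 - |τ(u)|²
  have hlow : t ^ 2 * W / (4 * m) ≤ 1 - ‖normalizedTrace u‖ ^ 2 := by
    rw [h1cos]
    have hsum : ∑ k : Fin m, ∑ l : Fin m, (θ k - θ l) ^ 2 / 8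
        ≤ ∑ k : Fin m, ∑ l : Fin m, (1 - Real.cos (θ k - θ l)) := by
      refine Finset.sum_le_sum fun k _ => Finset.sum_le_sum fun l _ => ?_
      refine sq_div_eight_le_one_sub_cos ?_
      have : θ k - θ l = t * (lam k - lam l) := by rw [hθdef]; ring
      rw [this]
      exact habs k l
    have hpair : ∑ k : Fin m, ∑ l : Fin m, (θ k - θ l) ^ 2 / 8
        = t ^ 2 * (2 * m * W) / 8 := by
      have h8 : ∑ k : Fin m, ∑ l : Fin m, (θ k - θ l) ^ 2
          = t ^ 2 * (2 * m * W) := by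
        have hθpair : ∀ k l : Fin m, (θ k - θ l) ^ 2
            = t ^ 2 * (lam k - lam l) ^ 2 := by
          intro k l; rw [hθdef]; ring
        rw [Finset.sum_congr rfl fun k _ => Finset.sum_congr rfl fun l _ => hθpair k l]
        simp only [← Finset.mul_sum]
        rw [pair_sum_identity hm lam, hWdef, hμdef]
      rw [← h8]
      rw [Finset.sum_div]
      exact Finset.sum_congr rfl fun k _ => by rw [Finset.sum_div]
    calc t ^ 2 * W / (4 * m)
        = t ^ 2 * (2 * m * W) / 8 / ((m:ℝ) ^ 2) := by
          field_simp
          ring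
      _ = (∑ k : Fin m, ∑ l : Fin m, (θ k - θ l) ^ 2 / 8) / ((m:ℝ) ^ 2) := by rw [hpair]
      _ ≤ _ := by
          exact div_le_div_of_nonneg_right hsum (by positivity)
  -- assemble the chain
  have hchain : ε * (t ^ 2 * W / (4 * m)) ≤ t ^ 2 * elementaryDirichletForm F b :=
    le_trans (mul_le_mul_of_nonneg_left hlow hε.le)
      (le_trans (hgap u humem) hEuEb)
  have hkey : ε * W / (4 * m) ≤ elementaryDirichletForm F b := by
    have h1 : t ^ 2 * (ε * W / (4 * m)) ≤ t ^ 2 * elementaryDirichletForm F b := by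
      rw [show t ^ 2 * (ε * W / (4 * m)) = ε * (t ^ 2 * W / (4 * m)) from by ring]
      exact hchain
    exact le_of_mul_le_mul_left h1 (by positivity)
  rw [hvar]
  have h2 : (ε / 8) * (W / m) ≤ ε * W / (4 * m) := by
    rw [show (ε / 8) * (W / m) = ε * W / (8 * m) from by ring]
    apply div_le_div_of_nonneg_left (by positivity) (by positivity) (by linarith)
  linarith

lemma E_conjTranspose (F : Finset (Mat m)) (hF : ∀ x ∈ F, xᴴ ∈ F) (a : Mat m) :
    elementaryDirichletForm F aᴴ = elementaryDirichletForm F a := by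
  rw [E_eq, E_eq]
  congr 1
  refine Finset.sum_nbij' (fun x => xᴴ) (fun x => xᴴ) (fun x hx => hF x hx)
    (fun x hx => hF x hx) (fun x _ => Matrix.conjTranspose_conjTranspose x)
    (fun x _ => Matrix.conjTranspose_conjTranspose x) (fun x _ => ?_)
  have h1 : x * aᴴ - aᴴ * x = -((xᴴ * a - a * xᴴ)ᴴ) := by
    rw [Matrix.conjTranspose_sub, Matrix.conjTranspose_mul, Matrix.conjTranspose_mul,
      Matrix.conjTranspose_conjTranspose, neg_sub]
  rw [h1, frob_neg, frob_conjTranspose]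

lemma herm_entry_conj {P : Mat m} (hP : P.IsHermitian) (i j : Fin m) :
    (starRingEnd ℂ) (P i j) = P j i := by
  have h : Pᴴ j i = P j i := by rw [show Pᴴ = P from hP]
  rw [← h, Matrix.conjTranspose_apply]
  rfl

lemma herm_cross_im_zero {P Q : Mat m} (hP : P.IsHermitian) (hQ : Q.IsHermitian) :
    (∑ i, ∑ j, P i j * (starRingEnd ℂ) (Q i j)).im = 0 := by
  rw [← Complex.conj_eq_iff_im]
  calc (starRingEnd ℂ) (∑ i, ∑ j, P i j * (starRingEnd ℂ) (Q i j))
      = ∑ i, ∑ j, P j i * (starRingEnd ℂ) (Q j i) := by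
        rw [map_sum]
        refine Finset.sum_congr rfl fun i _ => ?_
        rw [map_sum]
        refine Finset.sum_congr rfl fun j _ => ?_
        rw [_root_.map_mul, Complex.conj_conj, herm_entry_conj hP, ← herm_entry_conj hQ j i]
    _ = ∑ i, ∑ j, P i j * (starRingEnd ℂ) (Q i j) := Finset.sum_comm

lemma frob_herm_add_I_smul {P Q : Mat m} (hP : P.IsHermitian) (hQ : Q.IsHermitian) :
    frob (P + Complex.I • Q) = frob P + frob Q := by
  have hcross : ∀ i j : Fin m,
      Complex.normSq ((P + Complex.I • Q) i j)
        = Complex.normSq (P i j) + Complex.normSq (Q i j)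
          + 2 * (P i j * (starRingEnd ℂ) (Q i j)).im := by
    intro i j
    rw [Matrix.add_apply, Matrix.smul_apply, Complex.normSq_add, smul_eq_mul,
      Complex.normSq_mul, Complex.normSq_I, one_mul]
    congr 1
    rw [_root_.map_mul, Complex.conj_I]
    rw [show P i j * (-Complex.I * (starRingEnd ℂ) (Q i j))
        = P i j * (starRingEnd ℂ) (Q i j) * (-Complex.I) from by ring]
    simp [Complex.mul_re]
  unfold frob
  rw [Finset.sum_congr rfl fun i (_ : i ∈ Finset.univ) =>
    Finset.sum_congr rfl fun j (_ : j ∈ Finset.univ) => hcross i j]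
  simp only [Finset.sum_add_distrib]
  have him : ∑ i, ∑ j, 2 * (P i j * (starRingEnd ℂ) (Q i j)).im = 0 := by
    have h := herm_cross_im_zero hP hQ
    rw [Complex.im_sum] at h
    simp only [Complex.im_sum] at h
    simp only [← Finset.mul_sum]
    rw [h, mul_zero]
  linarith [him]

end PoincareAux

open PoincareAux in
/-- Absence of Property (Γ), expressed as a uniform lower bound
`ε(1 − |τ(u)|²) ≤ E_F(u)` over all unitaries `u`, implies a Poincaré inequality
`(ε/8)‖a − τ(a)1‖₂² ≤ E_F(a)` for the elementary Dirichlet form `E_F`. -/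
theorem poincare_of_gap_on_unitaries
    {m : ℕ} (F : Finset (Matrix (Fin m) (Fin m) ℂ)) (hF : ∀ x ∈ F, xᴴ ∈ F)
    {ε : ℝ} (hε : 0 < ε)
    (hgap : ∀ u : Matrix (Fin m) (Fin m) ℂ, u ∈ Matrix.unitaryGroup (Fin m) ℂ →
      ε * (1 - ‖normalizedTrace u‖ ^ 2) ≤ elementaryDirichletForm F u) :
    ∀ a : Matrix (Fin m) (Fin m) ℂ,
      (ε / 8) * (normalizedTrace ((a - normalizedTrace a • 1)ᴴ *
          (a - normalizedTrace a • 1))).re ≤ elementaryDirichletForm F a := by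
  intro a
  rcases Nat.eq_zero_or_pos m with hm | hm
  · subst hm
    have hnt : ∀ X : Mat 0, normalizedTrace X = 0 := by
      intro X
      simp [normalizedTrace, Matrix.trace]
    rw [hnt]
    simp [elementaryDirichletForm, hnt]
  · obtain ⟨b, hbdef⟩ : ∃ b : Mat m, b = ((1:ℂ)/2) • (a + aᴴ) := ⟨_, rfl⟩
    obtain ⟨c, hcdef⟩ : ∃ c : Mat m, c = (-Complex.I/2) • (a - aᴴ) := ⟨_, rfl⟩
    have hb : b.IsHermitian := by
      show bᴴ = b
      rw [hbdef, Matrix.conjTranspose_smul, Matrix.conjTranspose_add,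
        Matrix.conjTranspose_conjTranspose]
      rw [show star ((1:ℂ)/2) = (1:ℂ)/2 from Complex.conj_eq_iff_im.mpr (by norm_num)]
      rw [add_comm aᴴ a]
    have hc : c.IsHermitian := by
      show cᴴ = c
      rw [hcdef, Matrix.conjTranspose_smul, Matrix.conjTranspose_sub,
        Matrix.conjTranspose_conjTranspose]
      rw [show star (-Complex.I/2) = Complex.I/2 from by
        simp [Complex.star_def, map_div₀, Complex.conj_I]]
      module
    have hab : a = b + Complex.I • c := by
      rw [hbdef, hcdef, smul_smul]
      rw [show Complex.I * (-Complex.I/2) = (1:ℂ)/2 from by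
        rw [show Complex.I * (-Complex.I/2) = -(Complex.I*Complex.I)/2 from by ring,
          Complex.I_mul_I]
        norm_num]
      module
    have haH : aᴴ = b - Complex.I • c := by
      conv_lhs => rw [hab]
      rw [Matrix.conjTranspose_add, Matrix.conjTranspose_smul,
        show bᴴ = b from hb, show cᴴ = c from hc, Complex.star_def, Complex.conj_I]
      module
    have hnt_add : ∀ X Y : Mat m,
        normalizedTrace (X + Y) = normalizedTrace X + normalizedTrace Y := by
      intro X Y
      rw [normalizedTrace, normalizedTrace, normalizedTrace, Matrix.trace_add, add_div]
    have hnt_smul : ∀ (z : ℂ) (X : Mat m),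
        normalizedTrace (z • X) = z * normalizedTrace X := by
      intro z X
      rw [normalizedTrace, normalizedTrace, Matrix.trace_smul, smul_eq_mul, mul_div_assoc]
    have hτ : normalizedTrace a = normalizedTrace b + Complex.I * normalizedTrace c := by
      conv_lhs => rw [hab]
      rw [hnt_add, hnt_smul]
    have hherm_trace : ∀ X : Mat m, X.IsHermitian →
        (starRingEnd ℂ) (normalizedTrace X) = normalizedTrace X := by
      intro X hX
      have h := Matrix.trace_conjTranspose X
      rw [show Xᴴ = X from hX] at h
      rw [normalizedTrace, map_div₀, map_natCast]
      rw [show (starRingEnd ℂ) X.trace = star X.trace from rfl, ← h]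
    have hP_herm : (b - normalizedTrace b • 1).IsHermitian := by
      show _ᴴ = _
      rw [Matrix.conjTranspose_sub, Matrix.conjTranspose_smul, Matrix.conjTranspose_one,
        show bᴴ = b from hb, show star (normalizedTrace b) = (starRingEnd ℂ) (normalizedTrace b)
          from rfl, hherm_trace b hb]
    have hQ_herm : (c - normalizedTrace c • 1).IsHermitian := by
      show _ᴴ = _
      rw [Matrix.conjTranspose_sub, Matrix.conjTranspose_smul, Matrix.conjTranspose_one,
        show cᴴ = c from hc, show star (normalizedTrace c) = (starRingEnd ℂ) (normalizedTrace c)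
          from rfl, hherm_trace c hc]
    have hPQ : a - normalizedTrace a • 1
        = (b - normalizedTrace b • 1) + Complex.I • (c - normalizedTrace c • 1) := by
      rw [hτ]
      conv_lhs => rw [hab]
      module
    have hvar_split : (normalizedTrace ((a - normalizedTrace a • 1)ᴴ *
          (a - normalizedTrace a • 1))).re
        = (normalizedTrace ((b - normalizedTrace b • 1)ᴴ * (b - normalizedTrace b • 1))).re
          + (normalizedTrace ((c - normalizedTrace c • 1)ᴴ * (c - normalizedTrace c • 1))).re := by
      rw [hPQ, nt_re, nt_re, nt_re, frob_herm_add_I_smul hP_herm hQ_herm, add_div]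
    have hE_split : elementaryDirichletForm F b + elementaryDirichletForm F c
        = elementaryDirichletForm F a := by
      have hEaH := E_conjTranspose F hF a
      have hpar : ∀ x : Mat m, frob (x * a - a * x) + frob (x * aᴴ - aᴴ * x)
          = 2 * frob (x * b - b * x) + 2 * frob (x * c - c * x) := by
        intro x
        have h1 : x * a - a * x = (x * b - b * x) + Complex.I • (x * c - c * x) := by
          conv_lhs => rw [hab]
          rw [Matrix.mul_add, Matrix.add_mul, mul_smul_comm, smul_mul_assoc]
          module
        have h2 : x * aᴴ - aᴴ * x = (x * b - b * x) - Complex.I • (x * c - c * x) := by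
          conv_lhs => rw [haH]
          rw [Matrix.mul_sub, Matrix.sub_mul, mul_smul_comm, smul_mul_assoc]
          module
        rw [h1, h2, frob_parallelogram, frob_smul_I]
      have hsum : (∑ x ∈ F, frob (x * a - a * x)) + (∑ x ∈ F, frob (x * aᴴ - aᴴ * x))
          = 2 * (∑ x ∈ F, frob (x * b - b * x)) + 2 * (∑ x ∈ F, frob (x * c - c * x)) := by
        rw [← Finset.sum_add_distrib, Finset.mul_sum, Finset.mul_sum,
          ← Finset.sum_add_distrib]
        exact Finset.sum_congr rfl fun x _ => hpar x
      have hmne : (m:ℝ) ≠ 0 := ne_of_gt (by exact_mod_cast hm)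
      have hcomb : elementaryDirichletForm F a + elementaryDirichletForm F aᴴ
          = 2 * elementaryDirichletForm F b + 2 * elementaryDirichletForm F c := by
        rw [E_eq F a, E_eq F aᴴ, E_eq F b, E_eq F c, ← add_div, hsum]
        field_simp
        try ring
      rw [hEaH] at hcomb
      linarith
    have h1 := hermitian_poincare hm F hε hgap b hb
    have h2 := hermitian_poincare hm F hε hgap c hc
    rw [hvar_split, mul_add, ← hE_split]
    exact add_le_add h1 h2
end
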